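/- For every positive natural number n, ϱ(n) = Σ_{J ⊆ P(n)} φ(Π_{p ∈ J} p^(n_p)), where P(n) is the set of prime divisors of n and n_p is the p-adic valuation of n. -/

import Mathlib

/-- An element `m` of `ZMod n` is regular if `m^2 * x = m` for some `x`. -/
def IsRegularElem {n : ℕ} (m : ZMod n) : Prop := ∃ x : ZMod n, m ^ 2 * x = m

/-- `ϱ n` is the number of regular elements of `ZMod n`. -/
noncomputable def rho (n : ℕ) : ℕ := Nat.card {m : ZMod n // IsRegularElem m}

/-- General regularity predicate in a commutative ring. -/
def IsReg {R : Type*} [CommRing R] (m : R) : Prop := ∃ x : R, m ^ 2 * x = m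

lemma isReg_map {R S : Type*} [CommRing R] [CommRing S] (e : R ≃+* S) (m : R) :
    IsReg (e m) ↔ IsReg m := by
  constructor
  · rintro ⟨x, hx⟩
    refine ⟨e.symm x, ?_⟩
    have := congrArg e.symm hx
    simpa [map_mul, map_pow] using this
  · rintro ⟨x, hx⟩
    exact ⟨e x, by rw [← map_pow, ← map_mul, hx]⟩

lemma card_reg_congr {R S : Type*} [CommRing R] [CommRing S] (e : R ≃+* S) :
    Nat.card {m : R // IsReg m} = Nat.card {m : S // IsReg m} :=
  Nat.card_congr (e.toEquiv.subtypeEquiv fun m => (isReg_map e m).symm)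

lemma isReg_pi {ι : Type*} (R : ι → Type*) [∀ i, CommRing (R i)] (m : Π i, R i) :
    IsReg m ↔ ∀ i, IsReg (m i) := by
  constructor
  · rintro ⟨x, hx⟩ i
    exact ⟨x i, congrFun hx i⟩
  · intro h
    choose x hx using h
    exact ⟨x, funext hx⟩

lemma isUnit_zmod_pow_iff {p k : ℕ} (hp : p.Prime) (hk : k ≠ 0) (y : ZMod (p ^ k)) :
    IsUnit y ↔ (ZMod.castHom (dvd_pow_self p hk) (ZMod p)) y ≠ 0 := by
  haveI : Fact p.Prime := ⟨hp⟩
  haveI : NeZero (p ^ k) := ⟨pow_ne_zero _ hp.pos.ne'⟩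
  have hy : ((y.val : ℕ) : ZMod (p ^ k)) = y := ZMod.natCast_rightInverse y
  constructor
  · intro h
    exact (h.map (ZMod.castHom (dvd_pow_self p hk) (ZMod p))).ne_zero
  · intro h
    have h1 : ((y.val : ℕ) : ZMod p) ≠ 0 := by
      rwa [show ((y.val : ℕ) : ZMod p) = (ZMod.castHom (dvd_pow_self p hk) (ZMod p)) y by
        rw [← hy]; simp]
    have h2 : ¬ p ∣ y.val := fun hdvd =>
      h1 ((ZMod.natCast_eq_zero_iff _ _).mpr hdvd)
    have h3 : (y.val).Coprime p := ((Nat.Prime.coprime_iff_not_dvd hp).mpr h2).symm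
    have h4 : (y.val).Coprime (p ^ k) := h3.pow_right _
    rw [← hy]
    exact (ZMod.isUnit_iff_coprime _ _).mpr h4

lemma isReg_zmod_pow_iff {p k : ℕ} (hp : p.Prime) (hk : k ≠ 0) (m : ZMod (p ^ k)) :
    IsReg m ↔ m = 0 ∨ IsUnit m := by
  constructor
  · rintro ⟨x, hx⟩
    by_cases hm : IsUnit m
    · exact Or.inr hm
    · left
      have hm0 : (ZMod.castHom (dvd_pow_self p hk) (ZMod p)) m = 0 := by
        by_contra h
        exact hm ((isUnit_zmod_pow_iff hp hk m).mpr h)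
      haveI : Fact p.Prime := ⟨hp⟩
      have hu : IsUnit (1 - m * x) := by
        rw [isUnit_zmod_pow_iff hp hk, map_sub, map_one, map_mul, hm0, zero_mul, sub_zero]
        exact one_ne_zero
      have hz : m * (1 - m * x) = 0 := by
        rw [mul_sub, mul_one, show m * (m * x) = m ^ 2 * x by ring, hx, sub_self]
      have := congrArg
        (fun z => z * ((hu.unit⁻¹ : (ZMod (p ^ k))ˣ) : ZMod (p ^ k))) hz
      simpa [mul_assoc, hu.mul_val_inv] using this
  · rintro (rfl | hm)
    · exact ⟨0, by ring⟩
    · exact ⟨↑hm.unit⁻¹, by rw [sq, mul_assoc, hm.mul_val_inv, mul_one]⟩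

/-- Units of a monoid are equivalent to the subtype of unit elements. -/
noncomputable def unitsEquivIsUnit {M : Type*} [Monoid M] : Mˣ ≃ {x : M // IsUnit x} where
  toFun u := ⟨u, u.isUnit⟩
  invFun x := x.2.unit
  left_inv u := Units.ext u.isUnit.unit_spec
  right_inv x := Subtype.ext x.2.unit_spec

lemma card_reg_zmod_pow {p k : ℕ} (hp : p.Prime) (hk : k ≠ 0) :
    Nat.card {m : ZMod (p ^ k) // IsReg m} = Nat.totient (p ^ k) + 1 := by
  haveI : Fact p.Prime := ⟨hp⟩
  haveI : NeZero (p ^ k) := ⟨pow_ne_zero _ hp.pos.ne'⟩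
  haveI : Fact (1 < p ^ k) := ⟨Nat.one_lt_pow hk hp.one_lt⟩
  classical
  rw [Nat.card_eq_fintype_card, Fintype.card_subtype]
  have hfilter : (Finset.univ.filter (IsReg (R := ZMod (p ^ k))))
      = insert (0 : ZMod (p ^ k)) (Finset.univ.filter IsUnit) := by
    ext m
    simp [isReg_zmod_pow_iff hp hk]
  rw [hfilter, Finset.card_insert_of_notMem (by simp [not_isUnit_zero])]
  have : (Finset.univ.filter (IsUnit (M := ZMod (p ^ k)))).card
      = Fintype.card (ZMod (p ^ k))ˣ := by
    rw [← Fintype.card_subtype]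
    exact (Fintype.card_congr unitsEquivIsUnit).symm
  rw [this, ZMod.card_units_eq_totient]

lemma totient_prod_coprime {J : Finset ℕ} (f : ℕ → ℕ)
    (h : ∀ p ∈ J, ∀ q ∈ J, p ≠ q → Nat.Coprime (f p) (f q)) :
    Nat.totient (∏ p ∈ J, f p) = ∏ p ∈ J, Nat.totient (f p) := by
  classical
  induction J using Finset.induction_on with
  | empty => simp
  | @insert a s ha ih =>
    rw [Finset.prod_insert ha, Finset.prod_insert ha,
      Nat.totient_mul (Nat.Coprime.prod_right fun q hq =>
        h a (Finset.mem_insert_self a s) q (Finset.mem_insert_of_mem hq)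
          (fun e => ha (e ▸ hq))),
      ih fun p hp q hq hpq =>
        h p (Finset.mem_insert_of_mem hp) q (Finset.mem_insert_of_mem hq) hpq]

theorem rho_eq_sum_powerset_totient (n : ℕ) (hn : 0 < n) :
    rho n = ∑ J ∈ n.primeFactors.powerset, Nat.totient (∏ p ∈ J, p ^ n.factorization p) := by
  classical
  have hn' : n ≠ 0 := hn.ne'
  haveI : NeZero n := ⟨hn'⟩
  -- RHS equals the product of (totient + 1)
  have hRHS : ∑ J ∈ n.primeFactors.powerset, Nat.totient (∏ p ∈ J, p ^ n.factorization p)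
      = ∏ p ∈ n.primeFactors, (Nat.totient (p ^ n.factorization p) + 1) := by
    rw [Finset.prod_add]
    simp only [Finset.prod_const_one, mul_one]
    refine Finset.sum_congr rfl fun J hJ => ?_
    have hJ' := Finset.mem_powerset.mp hJ
    exact totient_prod_coprime _ fun a ha b hb hab =>
      Nat.Coprime.pow _ _ (((Nat.coprime_primes (Nat.prime_of_mem_primeFactors (hJ' ha))
          (Nat.prime_of_mem_primeFactors (hJ' hb))).mpr hab))
  rw [hRHS]
  -- LHS
  have hprod : (∏ i : n.primeFactors, (i : ℕ) ^ n.factorization i) = n := by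
    rw [Finset.prod_coe_sort _ (fun p => p ^ n.factorization p)]
    conv_rhs => rw [← Nat.factorization_prod_pow_eq_self hn']
    rfl
  have hcop : Pairwise (Function.onFun Nat.Coprime fun i : n.primeFactors =>
      (i : ℕ) ^ n.factorization i) := by
    intro i j hij
    exact Nat.Coprime.pow _ _ (((Nat.coprime_primes (Nat.prime_of_mem_primeFactors i.2)
      (Nat.prime_of_mem_primeFactors j.2)).mpr (fun e => hij (Subtype.ext e))))
  have e : ZMod n ≃+* Π i : n.primeFactors, ZMod ((i : ℕ) ^ n.factorization i) := by
    have e0 := ZMod.prodEquivPi (fun i : n.primeFactors => (i : ℕ) ^ n.factorization i) hcop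
    rwa [hprod] at e0
  have h1 : rho n = Nat.card {m : ZMod n // IsReg m} := rfl
  rw [h1, card_reg_congr e,
    Nat.card_congr ((Equiv.subtypeEquivRight fun m => isReg_pi _ m).trans
      (Equiv.subtypePiEquivPi
        (p := fun (i : n.primeFactors) (x : ZMod ((i : ℕ) ^ n.factorization i)) => IsReg x))),
    Nat.card_pi,
    ← Finset.prod_coe_sort _ (fun p => Nat.totient (p ^ n.factorization p) + 1)]
  refine Finset.prod_congr rfl fun i _ => ?_
  exact card_reg_zmod_pow (Nat.prime_of_mem_primeFactors i.2)
    ((Nat.prime_of_mem_primeFactors i.2).factorization_pos_of_dvd hn'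
      (Nat.dvd_of_mem_primeFactors i.2)).ne'
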